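/- Let E be a finite-dimensional associative unital normed algebra over ℝ, and let ε, κ, τ, σ > 0 with σ < τ and let δ ∈ (0,1). Let η and η' be Borel probability measures on E such that η − δ^σ η' is a nonnegative Borel measure (i.e. η = δ^σ η' + ρ for some Borel measure ρ). If η satisfies NC(ε, κ, τ) at scale δ, then η' satisfies NC(ε + σ, κ, τ − σ) at scale δ. -/
import Mathlib


open MeasureTheory

noncomputable section

variable {E : Type*} [NormedRing E] [NormedAlgebra ℝ E] [FiniteDimensional ℝ E]
  [MeasurableSpace E] [BorelSpace E]

/-- The determinant of the left-multiplication map `y ↦ x y` on the algebra `E`. -/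
def algDet (x : E) : ℝ := LinearMap.det (LinearMap.mulLeft ℝ x)

/-- The non-concentration property `NC₀(ε, κ, τ)` at scale `δ` for a Borel measure on a
finite-dimensional normed algebra `E`:
(i) mass at most `δ^τ` outside the ball of radius `δ^{-ε}`;
(ii) every translate of `S(δ^ε) = {x : |det x| ≤ δ^ε}` has mass at most `δ^τ`;
(iii) every `ρ`-neighborhood (`ρ ≥ δ`) of a proper affine subspace has mass at most
`δ^{-ε} ρ^κ`. -/
def NCzero (ε κ τ δ : ℝ) (η : Measure E) : Prop :=
  η ((Metric.closedBall (0 : E) (δ ^ (-ε)))ᶜ) ≤ ENNReal.ofReal (δ ^ τ) ∧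
  (∀ x : E, η { y : E | |algDet (y - x)| ≤ δ ^ ε } ≤ ENNReal.ofReal (δ ^ τ)) ∧
  ∀ ρ : ℝ, δ ≤ ρ → ∀ W : AffineSubspace ℝ E, W ≠ ⊤ →
    η { x : E | ∃ w ∈ (W : Set E), dist x w ≤ ρ } ≤ ENNReal.ofReal (δ ^ (-ε) * ρ ^ κ)

/-- The non-concentration property `NC(ε, κ, τ)` at scale `δ`: the measure is a sum
`η₀ + η₁` with `η₀` satisfying `NC₀(ε, κ, τ)` at scale `δ` and `η₁` of total mass at
most `δ^τ`. -/
def NC (ε κ τ δ : ℝ) (η : Measure E) : Prop :=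
  ∃ η₀ η₁ : Measure E, η = η₀ + η₁ ∧ NCzero ε κ τ δ η₀ ∧
    η₁ Set.univ ≤ ENNReal.ofReal (δ ^ τ)

/-- The Fourier transform `η̂(ξ) = ∫ e^{2πi ξ(x)} dη(x)` of a measure on `E` at a
continuous linear functional `ξ ∈ E*`. -/
def mFourier (η : Measure E) (ξ : E →L[ℝ] ℝ) : ℂ :=
  ∫ x, Complex.exp (2 * Real.pi * Complex.I * (ξ x : ℂ)) ∂η

/-- Multiplicative convolution of two measures (for s-finite measures this is the
pushforward of `μ ⊗ ν` under `(x, y) ↦ x y`). -/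
def mconv (μ ν : Measure E) : Measure E :=
  μ.bind fun x => ν.map fun y => x * y

/-- Additive convolution `μ ⊞ ν`. -/
def aconv (μ ν : Measure E) : Measure E :=
  μ.bind fun x => ν.map fun y => x + y

/-- Additive "deconvolution" `μ ⊟ ν`, the law of `x - y`. -/
def asub (μ ν : Measure E) : Measure E :=
  μ.bind fun x => ν.map fun y => x - y

/-- `k`-fold additive convolution `μ^{⊞ k}`. -/
def aconvPow (μ : Measure E) : ℕ → Measure E
  | 0 => Measure.dirac 0
  | k + 1 => aconv μ (aconvPow μ k)

/-- The multiplicative convolution `η 0 * η 1 * ⋯ * η (s-1)`. -/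
def mulConvFin : {s : ℕ} → (Fin s → Measure E) → Measure E
  | 0, _ => Measure.dirac 1
  | _ + 1, η => mconv (η 0) (mulConvFin fun i => η i.succ)

end

noncomputable section

open scoped ENNReal

/-- If a finite measure `μ` is bounded by `a + b`, it decomposes as a sum of a measure
bounded by `a` and a measure bounded by `b`. -/
lemma decomp_le_add {α : Type*} [MeasurableSpace α] (μ a b : Measure α)
    [IsFiniteMeasure μ] [IsFiniteMeasure a] [IsFiniteMeasure b]
    (hle : μ ≤ a + b) :
    ∃ ν₀ ν₁ : Measure α, μ = ν₀ + ν₁ ∧ ν₀ ≤ a ∧ ν₁ ≤ b := by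
  set lam : Measure α := a + b with hlam
  set f := μ.rnDeriv lam with hf
  set g := a.rnDeriv lam with hg
  set h := b.rnDeriv lam with hh
  have hfm : Measurable f := Measure.measurable_rnDeriv μ lam
  have hgm : Measurable g := Measure.measurable_rnDeriv a lam
  have hac : μ ≪ lam := Measure.absolutelyContinuous_of_le hle
  have hμ : lam.withDensity f = μ := Measure.withDensity_rnDeriv_eq μ lam hac
  have ha : lam.withDensity g = a :=
    Measure.withDensity_rnDeriv_eq a lam
      (Measure.absolutelyContinuous_of_le (Measure.le_add_right le_rfl))
  have hb : lam.withDensity h = b :=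
    Measure.withDensity_rnDeriv_eq b lam
      (Measure.absolutelyContinuous_of_le (Measure.le_add_left le_rfl))
  refine ⟨lam.withDensity (fun x => min (f x) (g x)),
    lam.withDensity (fun x => f x - min (f x) (g x)), ?_, ?_, ?_⟩
  · have hmeas : Measurable (fun x => f x - min (f x) (g x)) :=
      hfm.sub (hfm.min hgm)
    have hsum : (fun x => min (f x) (g x)) + (fun x => f x - min (f x) (g x)) = f := by
      funext x
      exact add_tsub_cancel_of_le (min_le_left (f x) (g x))
    calc μ = lam.withDensity f := hμ.symm
      _ = lam.withDensity
            ((fun x => min (f x) (g x)) + fun x => f x - min (f x) (g x)) := by rw [hsum]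
      _ = _ := withDensity_add_right _ hmeas
  · rw [← ha]
    exact withDensity_mono (Filter.Eventually.of_forall fun x => min_le_right _ _)
  · rw [← hb]
    have h1 : f ≤ᵐ[lam] 1 := Measure.rnDeriv_le_one_of_le hle
    have h3 : (fun _ => (1 : ℝ≥0∞)) =ᵐ[lam] g + h :=
      (Measure.rnDeriv_self lam).symm.trans (Measure.rnDeriv_add a b lam)
    refine withDensity_mono ?_
    filter_upwards [h1, h3] with x hx1 hx3
    have hxf : f x ≤ g x + h x := le_trans hx1 (le_of_eq hx3)
    rw [tsub_le_iff_right]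
    rcases le_total (f x) (g x) with hc | hc
    · rw [min_eq_left hc]; exact le_add_self
    · rw [min_eq_right hc]
      rw [add_comm] at hxf
      exact hxf

/-- **Absorbing a component of a measure preserves non-concentration**
(Lemma "eta'NC" of the paper): if `η = δ^σ η' + ρ` and `η` satisfies `NC(ε, κ, τ)` at
scale `δ`, then `η'` satisfies `NC(ε + σ, κ, τ − σ)` at scale `δ`. -/
theorem NC_of_component
    {E : Type*} [NormedRing E] [NormedAlgebra ℝ E] [FiniteDimensional ℝ E]
    [MeasurableSpace E] [BorelSpace E]
    (ε κ τ σ δ : ℝ) (hε : 0 < ε) (hκ : 0 < κ) (hτ : 0 < τ) (hσ : 0 < σ) (hστ : σ < τ)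
    (hδ : δ ∈ Set.Ioo (0 : ℝ) 1)
    (η η' : Measure E) [IsProbabilityMeasure η] [IsProbabilityMeasure η']
    (hsum : ∃ ρ : Measure E, η = (ENNReal.ofReal (δ ^ σ)) • η' + ρ)
    (hNC : NC ε κ τ δ η) :
    NC (ε + σ) κ (τ - σ) δ η' := by
  obtain ⟨ρm, hρ⟩ := hsum
  obtain ⟨η₀, η₁, hη, hNC0, hη₁⟩ := hNC
  have hδ0 : (0 : ℝ) < δ := hδ.1
  have hδ1 : δ ≤ 1 := le_of_lt hδ.2
  set c : ℝ≥0∞ := ENNReal.ofReal (δ ^ σ) with hc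
  set d : ℝ≥0∞ := ENNReal.ofReal (δ ^ (-σ)) with hd
  have hdc : d * c = 1 := by
    rw [hd, hc, ← ENNReal.ofReal_mul (le_of_lt (Real.rpow_pos_of_pos hδ0 _)),
      ← Real.rpow_add hδ0]
    norm_num
  have hη₀fin : IsFiniteMeasure η₀ := by
    constructor
    have : η₀ Set.univ ≤ η Set.univ := by rw [hη]; simp [Measure.add_apply]
    exact lt_of_le_of_lt this (by simp)
  have hη₁fin : IsFiniteMeasure η₁ := by
    constructor
    have : η₁ Set.univ ≤ η Set.univ := by rw [hη]; simp [Measure.add_apply]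
    exact lt_of_le_of_lt this (by simp)
  have hcη'fin : IsFiniteMeasure (c • η') := by
    constructor
    rw [Measure.smul_apply, smul_eq_mul, measure_univ, mul_one]
    exact ENNReal.ofReal_lt_top
  have hμle : c • η' ≤ η₀ + η₁ := by
    rw [← hη, hρ]
    exact Measure.le_add_right le_rfl
  obtain ⟨ν₀, ν₁, hdec, hν₀, hν₁⟩ := decomp_le_add (c • η') η₀ η₁ hμle
  -- key arithmetic facts
  have hofτ : d * ENNReal.ofReal (δ ^ τ) = ENNReal.ofReal (δ ^ (τ - σ)) := by
    rw [hd, ← ENNReal.ofReal_mul (le_of_lt (Real.rpow_pos_of_pos hδ0 _)),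
      ← Real.rpow_add hδ0]
    ring_nf
  refine ⟨d • ν₀, d • ν₁, ?_, ⟨?_, ?_, ?_⟩, ?_⟩
  · calc η' = (d * c) • η' := by rw [hdc, one_smul]
      _ = d • (c • η') := by rw [mul_smul]
      _ = d • ν₀ + d • ν₁ := by rw [hdec, smul_add]
  · -- condition (i)
    have hball : Metric.closedBall (0 : E) (δ ^ (-ε)) ⊆
        Metric.closedBall (0 : E) (δ ^ (-(ε + σ))) :=
      Metric.closedBall_subset_closedBall
        (Real.rpow_le_rpow_of_exponent_ge hδ0 hδ1 (by linarith))
    calc (d • ν₀) ((Metric.closedBall (0 : E) (δ ^ (-(ε + σ))))ᶜ)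
        ≤ d * η₀ ((Metric.closedBall (0 : E) (δ ^ (-(ε + σ))))ᶜ) := by
          rw [Measure.smul_apply, smul_eq_mul]
          exact mul_le_mul_right (hν₀ _) d
      _ ≤ d * η₀ ((Metric.closedBall (0 : E) (δ ^ (-ε)))ᶜ) :=
          mul_le_mul_right (measure_mono (Set.compl_subset_compl.mpr hball)) d
      _ ≤ d * ENNReal.ofReal (δ ^ τ) := mul_le_mul_right hNC0.1 d
      _ = ENNReal.ofReal (δ ^ (τ - σ)) := hofτ
  · -- condition (ii)
    intro x
    have hsub : { y : E | |algDet (y - x)| ≤ δ ^ (ε + σ) } ⊆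
        { y : E | |algDet (y - x)| ≤ δ ^ ε } := fun y hy =>
      le_trans hy (Real.rpow_le_rpow_of_exponent_ge hδ0 hδ1 (by linarith))
    calc (d • ν₀) { y : E | |algDet (y - x)| ≤ δ ^ (ε + σ) }
        ≤ d * η₀ { y : E | |algDet (y - x)| ≤ δ ^ (ε + σ) } := by
          rw [Measure.smul_apply, smul_eq_mul]
          exact mul_le_mul_right (hν₀ _) d
      _ ≤ d * η₀ { y : E | |algDet (y - x)| ≤ δ ^ ε } :=
          mul_le_mul_right (measure_mono hsub) d
      _ ≤ d * ENNReal.ofReal (δ ^ τ) := mul_le_mul_right (hNC0.2.1 x) d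
      _ = ENNReal.ofReal (δ ^ (τ - σ)) := hofτ
  · -- condition (iii)
    intro ρ hρδ W hW
    have harith : d * ENNReal.ofReal (δ ^ (-ε) * ρ ^ κ) =
        ENNReal.ofReal (δ ^ (-(ε + σ)) * ρ ^ κ) := by
      rw [hd, ← ENNReal.ofReal_mul (le_of_lt (Real.rpow_pos_of_pos hδ0 _)),
        ← mul_assoc, ← Real.rpow_add hδ0]
      ring_nf
    calc (d • ν₀) { x : E | ∃ w ∈ (W : Set E), dist x w ≤ ρ }
        ≤ d * η₀ { x : E | ∃ w ∈ (W : Set E), dist x w ≤ ρ } := by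
          rw [Measure.smul_apply, smul_eq_mul]
          exact mul_le_mul_right (hν₀ _) d
      _ ≤ d * ENNReal.ofReal (δ ^ (-ε) * ρ ^ κ) :=
          mul_le_mul_right (hNC0.2.2 ρ hρδ W hW) d
      _ = ENNReal.ofReal (δ ^ (-(ε + σ)) * ρ ^ κ) := harith
  · -- mass of the exceptional part
    calc (d • ν₁) Set.univ ≤ d * η₁ Set.univ := by
          rw [Measure.smul_apply, smul_eq_mul]
          exact mul_le_mul_right (hν₁ _) d
      _ ≤ d * ENNReal.ofReal (δ ^ τ) := mul_le_mul_right hη₁ d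
      _ = ENNReal.ofReal (δ ^ (τ - σ)) := hofτ

end
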